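/- Let k ≥ 2 be an integer. The range of the operator R̃_k : C([0,1]) → C([0,1]), R̃_k(f̃)(s) = c_k ∫₀¹ f̃(st)(1−t²)^((k−3)/2) dt, is dense in C([0,1]) with respect to the supremum norm. -/

import Mathlib

open MeasureTheory Set

/-- the range of `R̃ₖ : C([0,1]) → C([0,1])`,
`R̃ₖ(f̃)(s) = cₖ ∫₀¹ f̃(st)(1-t²)^((k-3)/2) dt`, is dense in `C([0,1])` for the sup norm. -/
theorem stmt4 (k : ℕ) (hk : 2 ≤ k) (c : ℝ) (hcpos : 0 < c)
    (hc : c * ∫ t in (0:ℝ)..1, (1 - t ^ 2) ^ (((k : ℝ) - 3) / 2) = 1) :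
    ∀ F : ℝ → ℝ, ContinuousOn F (Icc 0 1) → ∀ ε : ℝ, 0 < ε →
      ∃ f : ℝ → ℝ, ContinuousOn f (Icc 0 1) ∧
        ∀ s ∈ Icc (0:ℝ) 1,
          |(c * ∫ t in (0:ℝ)..1, f (s * t) * (1 - t ^ 2) ^ (((k : ℝ) - 3) / 2)) - F s| < ε := by
  intro F hF ε hε
  set g : ℝ → ℝ := fun t => (1 - t ^ 2) ^ (((k : ℝ) - 3) / 2) with hgdef
  have hg_int : IntervalIntegrable g volume 0 1 := by
    by_contra h
    rw [intervalIntegral.integral_undef h, mul_zero] at hc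
    exact one_ne_zero hc.symm
  have hint : ∀ m : ℕ, IntervalIntegrable (fun t => t ^ m * g t) volume 0 1 := by
    intro m
    have hcont : ContinuousOn (fun t => t ^ m * g t) (Ioo 0 1) := by
      refine (continuousOn_pow m).mul (ContinuousOn.rpow_const ?_ fun x hx => ?_)
      · fun_prop
      · left; nlinarith [hx.1, hx.2]
    have hmeas : AEStronglyMeasurable (fun t => t ^ m * g t) (volume.restrict (Set.uIoc 0 1)) := by
      rw [uIoc_of_le (zero_le_one' ℝ), ← Measure.restrict_congr_set Ioo_ae_eq_Ioc]
      exact (hcont.aemeasurable measurableSet_Ioo).aestronglyMeasurable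
    apply hg_int.mono_fun hmeas
    filter_upwards [ae_restrict_mem measurableSet_uIoc] with t ht
    rw [uIoc_of_le (zero_le_one' ℝ)] at ht
    have h1 : |t| ≤ 1 := by rw [abs_of_pos ht.1]; exact ht.2
    simp only [norm_mul, norm_pow, Real.norm_eq_abs]
    calc |t| ^ m * |g t| ≤ 1 ^ m * |g t| := by gcongr
      _ = |g t| := by ring
  set d : ℕ → ℝ := fun m => ∫ t in (0:ℝ)..1, t ^ m * g t with hddef
  have hd : ∀ m, 0 < d m := by
    intro m
    refine intervalIntegral.intervalIntegral_pos_of_pos_on (hint m) (fun x hx => ?_) one_pos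
    exact mul_pos (pow_pos hx.1 m)
      (Real.rpow_pos_of_pos (by nlinarith [hx.1, hx.2] : (0:ℝ) < 1 - x ^ 2) _)
  -- Weierstrass approximation
  let F' : C(Icc (0:ℝ) 1, ℝ) := ⟨(Icc (0:ℝ) 1).restrict F, hF.restrict⟩
  obtain ⟨p, hp⟩ := exists_polynomial_near_continuousMap 0 1 F' ε hε
  refine ⟨fun x => ∑ m ∈ p.support, p.coeff m / (c * d m) * x ^ m, ?_, ?_⟩
  · exact (continuous_finset_sum _ fun m _ =>
      (continuous_const.mul (continuous_pow m))).continuousOn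
  intro s hs
  have key : (∫ t in (0:ℝ)..1,
      (∑ m ∈ p.support, p.coeff m / (c * d m) * (s * t) ^ m) * g t)
      = ∑ m ∈ p.support, p.coeff m / (c * d m) * s ^ m * d m := by
    have : (fun t => (∑ m ∈ p.support, p.coeff m / (c * d m) * (s * t) ^ m) * g t)
        = fun t => ∑ m ∈ p.support, p.coeff m / (c * d m) * s ^ m * (t ^ m * g t) := by
      funext t
      rw [Finset.sum_mul]
      refine Finset.sum_congr rfl fun m _ => ?_
      rw [mul_pow]; ring
    rw [this, intervalIntegral.integral_finset_sum fun m _ => (hint m).const_mul _]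
    exact Finset.sum_congr rfl fun m _ => intervalIntegral.integral_const_mul _ _
  have heq : (c * ∫ t in (0:ℝ)..1,
      (∑ m ∈ p.support, p.coeff m / (c * d m) * (s * t) ^ m) * g t) = p.eval s := by
    rw [key, Finset.mul_sum]
    rw [Polynomial.eval_eq_sum, Polynomial.sum_def]
    refine Finset.sum_congr rfl fun m _ => ?_
    have hcd : c * d m ≠ 0 := (mul_pos hcpos (hd m)).ne'
    field_simp
    rw [mul_div_right_comm, mul_div_cancel_right₀ _ (hd m).ne']
  have hps : |p.eval s - F s| < ε := by
    have := ContinuousMap.norm_coe_le_norm (p.toContinuousMapOn (Icc (0:ℝ) 1) - F') ⟨s, hs⟩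
    simp only [ContinuousMap.sub_apply, Polynomial.toContinuousMapOn_apply,
      Polynomial.toContinuousMap_apply, Real.norm_eq_abs] at this
    calc |p.eval s - F s| ≤ ‖p.toContinuousMapOn (Icc (0:ℝ) 1) - F'‖ := this
      _ < ε := hp
  rw [heq]; exact hps
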